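/- For every positive integer m, the interval [m, 2^m·m - 1] is an S₂-full set, and 2^m·m ≤ 2^{2m} = τ(1, 2m). -/

import Mathlib

open Finset

/-- `F < G` for finite sets: every element of `F` is below every element of `G`. -/
def FinsetLT (F G : Finset ℕ) : Prop := ∀ x ∈ F, ∀ y ∈ G, x < y

/-- Membership in the Schreier family `S₁`: a finite set of positive integers
with `|F| ≤ min F` (the empty set belongs trivially). -/
def IsSchreier (F : Finset ℕ) : Prop := ∀ n ∈ F, 0 < n ∧ F.card ≤ n

/-- `F` is a union of at most `d` sets `F₁ < F₂ < ⋯`, each in the family `P`. -/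
def Combine (P : Finset ℕ → Prop) (d : ℕ) (F : Finset ℕ) : Prop :=
  ∃ L : List (Finset ℕ), L.length ≤ d ∧ L.Pairwise FinsetLT ∧
    (∀ G ∈ L, P G) ∧ L.foldr (· ∪ ·) ∅ = F

/-- Membership in `S₂`. -/
def MemS2 (F : Finset ℕ) : Prop :=
  F = ∅ ∨ ∃ h : F.Nonempty, Combine IsSchreier (F.min' h) F

/-- Membership in `S₃`. -/
def MemS3 (F : Finset ℕ) : Prop :=
  F = ∅ ∨ ∃ h : F.Nonempty, Combine MemS2 (F.min' h) F

/-- `F` is a maximal member of the family `P` (among sets of positive integers). -/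
def IsFull (P : Finset ℕ → Prop) (F : Finset ℕ) : Prop :=
  P F ∧ ∀ n : ℕ, 0 < n → n ∉ F → ¬ P (insert n F)

/-- `F ∈ full_{a,b}(P)`. -/
def FullAB (P : Finset ℕ → Prop) (a b : ℕ) (F : Finset ℕ) : Prop :=
  P F ∧ F ⊆ Finset.Icc a b ∧ a ∈ F ∧
    ∀ n ∈ Finset.Icc a b, n ∉ F → ¬ P (insert n F)

/-- The tower function `τ`. -/
def tau : ℕ → ℕ → ℕ
  | 0, a => a
  | i + 1, a => 2 ^ tau i a

/-- `E₁(F)`: `F` itself if `|F| ≤ min F`, otherwise the `min F` smallest elements of `F`. -/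
def E1 (F : Finset ℕ) : Finset ℕ :=
  if h : F.Nonempty then ((F.sort (· ≤ ·)).take (F.min' h)).toFinset else ∅

/-- Union of the first `i` greedy pieces. -/
def Eacc : ℕ → Finset ℕ → Finset ℕ
  | 0, _ => ∅
  | i + 1, F => Eacc i F ∪ E1 (F \ Eacc i F)

/-- The `i`-th greedy piece `E_i(F)` (for `i ≥ 1`). -/
def Epiece (i : ℕ) (F : Finset ℕ) : Finset ℕ := E1 (F \ Eacc (i - 1) F)

open Classical in
/-- `E₁*(F)`: `F` itself if `F ∈ S₂`, otherwise `E₁(F) ∪ ⋯ ∪ E_{min F}(F)`. -/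
noncomputable def E1star (F : Finset ℕ) : Finset ℕ :=
  if MemS2 F then F
  else if h : F.Nonempty then Eacc (F.min' h) F else ∅

/-- Union of the first `i` starred greedy pieces. -/
noncomputable def EaccStar : ℕ → Finset ℕ → Finset ℕ
  | 0, _ => ∅
  | i + 1, F => EaccStar i F ∪ E1star (F \ EaccStar i F)

/-- The `i`-th starred greedy piece `E_i*(F)` (for `i ≥ 1`). -/
noncomputable def EpieceStar (i : ℕ) (F : Finset ℕ) : Finset ℕ :=
  E1star (F \ EaccStar (i - 1) F)

lemma mem_foldr_union {x : ℕ} {L : List (Finset ℕ)} :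
    x ∈ L.foldr (· ∪ ·) ∅ ↔ ∃ G ∈ L, x ∈ G := by
  induction L with
  | nil => simp
  | cons F L ih => simp [Finset.mem_union, ih]

lemma min'_eq_of {F : Finset ℕ} {a : ℕ} (h : F.Nonempty) (ha : a ∈ F)
    (hle : ∀ x ∈ F, a ≤ x) : F.min' h = a :=
  le_antisymm (Finset.min'_le F a ha) (Finset.le_min' _ _ _ hle)

lemma weak_bound : ∀ L : List (Finset ℕ), L.Pairwise FinsetLT →
    (∀ G ∈ L, IsSchreier G) → ∀ s N : ℕ, 0 < s → s ≤ N →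
    Finset.Icc s N ⊆ L.foldr (· ∪ ·) ∅ → N < 2 ^ L.length * s := by
  intro L
  induction L with
  | nil =>
    intro _ _ s N hs hsN hsub
    exact absurd (hsub (Finset.mem_Icc.mpr ⟨le_refl s, hsN⟩)) (by simp)
  | cons F L ih =>
    intro hpair hS s N hs hsN hsub
    obtain ⟨hF, hpairL⟩ := List.pairwise_cons.mp hpair
    have hSF : IsSchreier F := hS F List.mem_cons_self
    have hSL : ∀ G ∈ L, IsSchreier G := fun G hG => hS G (List.mem_cons_of_mem _ hG)
    set S := (Finset.Icc s N).filter (· ∉ F) with hSdef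
    by_cases hSne : S.Nonempty
    · set s' := S.min' hSne with hs'def
      have hs'S : s' ∈ S := S.min'_mem hSne
      have hs'Icc : s ≤ s' ∧ s' ≤ N := Finset.mem_Icc.mp (Finset.mem_of_mem_filter _ hs'S)
      have hs'F : s' ∉ F := by
        have := Finset.mem_filter.mp hs'S
        simpa using this.2
      have hs'min : ∀ x ∈ S, s' ≤ x := fun x hx => Finset.min'_le S x hx
      have hbelow : ∀ x, s ≤ x → x < s' → x ∈ F := by
        intro x hx1 hx2
        by_contra hxF
        have hxS : x ∈ S := Finset.mem_filter.mpr
          ⟨Finset.mem_Icc.mpr ⟨hx1, le_trans (le_of_lt hx2) hs'Icc.2⟩, by simpa using hxF⟩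
        exact absurd (hs'min x hxS) (not_le.mpr hx2)
      have hs'U : s' ∈ L.foldr (· ∪ ·) ∅ := by
        have := hsub (Finset.mem_Icc.mpr hs'Icc)
        simp only [List.foldr_cons, Finset.mem_union] at this
        tauto
      have hFlt : ∀ x ∈ F, x < s' := by
        intro x hx
        obtain ⟨G, hG, hs'G⟩ := mem_foldr_union.mp hs'U
        exact hF G hG x hx s' hs'G
      have hsub' : Finset.Icc s' N ⊆ L.foldr (· ∪ ·) ∅ := by
        intro x hx
        have hx' := Finset.mem_Icc.mp hx
        have := hsub (Finset.mem_Icc.mpr ⟨le_trans hs'Icc.1 hx'.1, hx'.2⟩)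
        simp only [List.foldr_cons, Finset.mem_union] at this
        rcases this with h | h
        · exact absurd (hFlt x h) (not_lt.mpr hx'.1)
        · exact h
      have hs'2s : s' ≤ 2 * s := by
        by_cases hsF : s ∈ F
        · have hsubF : Finset.Icc s (s' - 1) ⊆ F := by
            intro x hx
            have hx' := Finset.mem_Icc.mp hx
            exact hbelow x hx'.1 (by omega)
          have hcard := Finset.card_le_card hsubF
          rw [Nat.card_Icc] at hcard
          have := (hSF s hsF).2
          omega
        · have : s ∈ S := Finset.mem_filter.mpr
            ⟨Finset.mem_Icc.mpr ⟨le_refl s, hsN⟩, by simpa using hsF⟩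
          have := hs'min s this
          omega
      have hIH := ih hpairL hSL s' N (by omega) hs'Icc.2 hsub'
      calc N < 2 ^ L.length * s' := hIH
        _ ≤ 2 ^ L.length * (2 * s) := Nat.mul_le_mul_left _ hs'2s
        _ = 2 ^ (F :: L).length * s := by simp [List.length_cons]; ring
    · have hsubF : Finset.Icc s N ⊆ F := by
        intro x hx
        by_contra hxF
        exact hSne ⟨x, Finset.mem_filter.mpr ⟨hx, by simpa using hxF⟩⟩
      have hsF : s ∈ F := hsubF (Finset.mem_Icc.mpr ⟨le_refl s, hsN⟩)
      have hcard := Finset.card_le_card hsubF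
      rw [Nat.card_Icc] at hcard
      have hFs := (hSF s hsF).2
      have h2 : 2 ≤ 2 ^ (F :: L).length := by
        have : 1 ≤ 2 ^ L.length := Nat.one_le_two_pow
        simp only [List.length_cons, pow_succ]
        omega
      calc N < 2 * s := by omega
        _ ≤ 2 ^ (F :: L).length * s := Nat.mul_le_mul_right _ h2

lemma strong_bound : ∀ L : List (Finset ℕ), L.Pairwise FinsetLT →
    (∀ G ∈ L, IsSchreier G) → ∀ s N n : ℕ, 0 < s → s ≤ N → N < n →
    Finset.Icc s N ⊆ L.foldr (· ∪ ·) ∅ → n ∈ L.foldr (· ∪ ·) ∅ →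
    N + 2 ≤ 2 ^ L.length * s := by
  intro L
  induction L with
  | nil =>
    intro _ _ s N n _ _ _ _ hn
    exact absurd hn (by simp)
  | cons F L ih =>
    intro hpair hS s N n hs hsN hNn hsub hn
    obtain ⟨hF, hpairL⟩ := List.pairwise_cons.mp hpair
    have hSF : IsSchreier F := hS F List.mem_cons_self
    have hSL : ∀ G ∈ L, IsSchreier G := fun G hG => hS G (List.mem_cons_of_mem _ hG)
    set S := (Finset.Icc s N).filter (· ∉ F) with hSdef
    by_cases hSne : S.Nonempty
    · set s' := S.min' hSne with hs'def
      have hs'S : s' ∈ S := S.min'_mem hSne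
      have hs'Icc : s ≤ s' ∧ s' ≤ N := Finset.mem_Icc.mp (Finset.mem_of_mem_filter _ hs'S)
      have hs'F : s' ∉ F := by
        have := Finset.mem_filter.mp hs'S
        simpa using this.2
      have hs'min : ∀ x ∈ S, s' ≤ x := fun x hx => Finset.min'_le S x hx
      have hbelow : ∀ x, s ≤ x → x < s' → x ∈ F := by
        intro x hx1 hx2
        by_contra hxF
        have hxS : x ∈ S := Finset.mem_filter.mpr
          ⟨Finset.mem_Icc.mpr ⟨hx1, le_trans (le_of_lt hx2) hs'Icc.2⟩, by simpa using hxF⟩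
        exact absurd (hs'min x hxS) (not_le.mpr hx2)
      have hs'U : s' ∈ L.foldr (· ∪ ·) ∅ := by
        have := hsub (Finset.mem_Icc.mpr hs'Icc)
        simp only [List.foldr_cons, Finset.mem_union] at this
        tauto
      have hFlt : ∀ x ∈ F, x < s' := by
        intro x hx
        obtain ⟨G, hG, hs'G⟩ := mem_foldr_union.mp hs'U
        exact hF G hG x hx s' hs'G
      have hsub' : Finset.Icc s' N ⊆ L.foldr (· ∪ ·) ∅ := by
        intro x hx
        have hx' := Finset.mem_Icc.mp hx
        have := hsub (Finset.mem_Icc.mpr ⟨le_trans hs'Icc.1 hx'.1, hx'.2⟩)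
        simp only [List.foldr_cons, Finset.mem_union] at this
        rcases this with h | h
        · exact absurd (hFlt x h) (not_lt.mpr hx'.1)
        · exact h
      have hnU : n ∈ L.foldr (· ∪ ·) ∅ := by
        simp only [List.foldr_cons, Finset.mem_union] at hn
        rcases hn with h | h
        · exact absurd (hFlt n h) (by omega)
        · exact h
      have hs'2s : s' ≤ 2 * s := by
        by_cases hsF : s ∈ F
        · have hsubF : Finset.Icc s (s' - 1) ⊆ F := by
            intro x hx
            have hx' := Finset.mem_Icc.mp hx
            exact hbelow x hx'.1 (by omega)
          have hcard := Finset.card_le_card hsubF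
          rw [Nat.card_Icc] at hcard
          have := (hSF s hsF).2
          omega
        · have : s ∈ S := Finset.mem_filter.mpr
            ⟨Finset.mem_Icc.mpr ⟨le_refl s, hsN⟩, by simpa using hsF⟩
          have := hs'min s this
          omega
      have hIH := ih hpairL hSL s' N n (by omega) hs'Icc.2 hNn hsub' hnU
      calc N + 2 ≤ 2 ^ L.length * s' := hIH
        _ ≤ 2 ^ L.length * (2 * s) := Nat.mul_le_mul_left _ hs'2s
        _ = 2 ^ (F :: L).length * s := by simp [List.length_cons]; ring
    · have hsubF : Finset.Icc s N ⊆ F := by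
        intro x hx
        by_contra hxF
        exact hSne ⟨x, Finset.mem_filter.mpr ⟨hx, by simpa using hxF⟩⟩
      have hsF : s ∈ F := hsubF (Finset.mem_Icc.mpr ⟨le_refl s, hsN⟩)
      have hcard := Finset.card_le_card hsubF
      rw [Nat.card_Icc] at hcard
      have hFs := (hSF s hsF).2
      simp only [List.foldr_cons, Finset.mem_union] at hn
      rcases hn with hnF | hnL
      · have hins : insert n (Finset.Icc s N) ⊆ F := by
          intro x hx
          rcases Finset.mem_insert.mp hx with h | h
          · exact h ▸ hnF
          · exact hsubF h
        have hnIcc : n ∉ Finset.Icc s N := by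
          simp [Finset.mem_Icc]; omega
        have hcard2 := Finset.card_le_card hins
        rw [Finset.card_insert_of_notMem hnIcc, Nat.card_Icc] at hcard2
        have h2 : 2 ≤ 2 ^ (F :: L).length := by
          have : 1 ≤ 2 ^ L.length := Nat.one_le_two_pow
          simp only [List.length_cons, pow_succ]
          omega
        calc N + 2 ≤ 2 * s := by omega
          _ ≤ 2 ^ (F :: L).length * s := Nat.mul_le_mul_right _ h2
      · have hLne : L ≠ [] := by
          intro h
          rw [h] at hnL
          simp at hnL
        have hlen : 1 ≤ L.length := by
          cases L with
          | nil => exact absurd rfl hLne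
          | cons a l => simp
        have h4 : 4 ≤ 2 ^ (F :: L).length := by
          simp only [List.length_cons]
          calc (4 : ℕ) = 2 ^ 2 := by norm_num
            _ ≤ 2 ^ (L.length + 1) := Nat.pow_le_pow_right (by norm_num) (by omega)
        calc N + 2 ≤ 2 * s + 1 := by omega
          _ ≤ 4 * s := by omega
          _ ≤ 2 ^ (F :: L).length * s := Nat.mul_le_mul_right _ h4

lemma union_blocks : ∀ (k a : ℕ), 0 < a →
    ((List.range k).map (fun i => Finset.Icc (2 ^ i * a) (2 ^ (i + 1) * a - 1))).foldr
      (· ∪ ·) ∅ = Finset.Icc a (2 ^ k * a - 1) := by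
  intro k
  induction k with
  | zero =>
    intro a ha
    simp only [List.range_zero, List.map_nil, List.foldr_nil, pow_zero, one_mul]
    exact (Finset.Icc_eq_empty (by omega)).symm
  | succ k ih =>
    intro a ha
    rw [List.range_succ_eq_map]
    simp only [List.map_cons, List.map_map, List.foldr_cons]
    have hfun : ((fun i => Finset.Icc (2 ^ i * a) (2 ^ (i + 1) * a - 1)) ∘ Nat.succ) =
        (fun i => Finset.Icc (2 ^ i * (2 * a)) (2 ^ (i + 1) * (2 * a) - 1)) := by
      funext i
      simp only [Function.comp_apply, Nat.succ_eq_add_one]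
      congr 1 <;> ring_nf
    rw [hfun, ih (2 * a) (by omega)]
    have h1 : 2 ^ (0 + 1) * a = 2 * a := by ring
    have h2 : 2 ^ k * (2 * a) = 2 ^ (k + 1) * a := by ring
    have h3 : a ≤ 2 ^ k * a := Nat.le_mul_of_pos_left a (Nat.pow_pos (by norm_num : 0 < 2))
    rw [h1, h2]
    ext x
    simp only [Finset.mem_union, Finset.mem_Icc, pow_zero, one_mul]
    have h4 : a ≤ 2 ^ (k + 1) * a := Nat.le_mul_of_pos_left a (Nat.pow_pos (by norm_num : 0 < 2))
    have h5 : 2 * a ≤ 2 ^ (k + 1) * a := by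
      rw [show (2:ℕ) ^ (k+1) * a = 2 * (2 ^ k * a) by ring]
      omega
    omega

lemma icc_memS2 (m : ℕ) (hm : 0 < m) : MemS2 (Finset.Icc m (2 ^ m * m - 1)) := by
  have h2m : 2 ≤ 2 ^ m := by
    calc (2:ℕ) = 2 ^ 1 := by norm_num
      _ ≤ 2 ^ m := Nat.pow_le_pow_right (by norm_num) hm
  have hmN : m ≤ 2 ^ m * m - 1 := by
    have h := Nat.mul_le_mul_right m h2m
    omega
  have hne : (Finset.Icc m (2 ^ m * m - 1)).Nonempty :=
    ⟨m, Finset.mem_Icc.mpr ⟨le_refl m, hmN⟩⟩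
  right
  refine ⟨hne, ?_⟩
  have hmin : (Finset.Icc m (2 ^ m * m - 1)).min' hne = m :=
    min'_eq_of hne (Finset.mem_Icc.mpr ⟨le_refl m, hmN⟩)
      (fun x hx => (Finset.mem_Icc.mp hx).1)
  rw [hmin]
  refine ⟨(List.range m).map (fun i => Finset.Icc (2 ^ i * m) (2 ^ (i + 1) * m - 1)),
    by simp, ?_, ?_, union_blocks m m hm⟩
  · rw [List.pairwise_map]
    refine List.Pairwise.imp_of_mem ?_ List.pairwise_lt_range
    intro i j _ _ hij x hx y hy
    have hx' := (Finset.mem_Icc.mp hx).2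
    have hy' := (Finset.mem_Icc.mp hy).1
    have hle : 2 ^ (i + 1) * m ≤ 2 ^ j * m :=
      Nat.mul_le_mul_right m (Nat.pow_le_pow_right (by norm_num) (by omega))
    have hpos : 0 < 2 ^ (i + 1) * m :=
      Nat.mul_pos (Nat.pow_pos (by norm_num : 0 < 2)) hm
    omega
  · intro G hG
    simp only [List.mem_map, List.mem_range] at hG
    obtain ⟨i, _, rfl⟩ := hG
    intro x hx
    have hx' := Finset.mem_Icc.mp hx
    have hpos : 0 < 2 ^ i * m := Nat.mul_pos (Nat.pow_pos (by norm_num : 0 < 2)) hm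
    have heq : 2 ^ (i + 1) * m = 2 * (2 ^ i * m) := by ring
    constructor
    · omega
    · rw [Nat.card_Icc]
      omega

theorem stmt5 (m : ℕ) (hm : 0 < m) :
    IsFull MemS2 (Finset.Icc m (2 ^ m * m - 1)) ∧
    2 ^ m * m ≤ 2 ^ (2 * m) ∧ 2 ^ (2 * m) = tau 1 (2 * m) := by
  have h2m : 2 ≤ 2 ^ m := by
    calc (2:ℕ) = 2 ^ 1 := by norm_num
      _ ≤ 2 ^ m := Nat.pow_le_pow_right (by norm_num) hm
  set N := 2 ^ m * m - 1 with hNdef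
  have hN1 : N + 1 = 2 ^ m * m := by
    have : 0 < 2 ^ m * m := Nat.mul_pos (by omega) hm
    omega
  have hmN : m ≤ N := by
    have h := Nat.mul_le_mul_right m h2m
    omega
  refine ⟨⟨icc_memS2 m hm, ?_⟩, ?_, ?_⟩
  · -- maximality
    intro n hn hnIcc hmem
    have hnIcc' : n < m ∨ N < n := by
      rw [Finset.mem_Icc] at hnIcc
      omega
    have hne : (insert n (Finset.Icc m N)).Nonempty := ⟨n, Finset.mem_insert_self _ _⟩
    rcases hmem with habs | ⟨h, L, hlen, hpair, hS, hunion⟩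
    · exact absurd (habs ▸ Finset.mem_insert_self n _) (by simp)
    · have hsub : Finset.Icc m N ⊆ L.foldr (· ∪ ·) ∅ := by
        rw [hunion]; exact Finset.subset_insert _ _
      rcases hnIcc' with hlt | hgt
      · -- n < m : min is n, length ≤ n ≤ m - 1
        have hmin : (insert n (Finset.Icc m N)).min' h = n := by
          apply min'_eq_of h (Finset.mem_insert_self _ _)
          intro x hx
          rcases Finset.mem_insert.mp hx with rfl | hx'
          · exact le_refl x
          · have := (Finset.mem_Icc.mp hx').1; omega
        rw [hmin] at hlen
        have hbound := weak_bound L hpair hS m N hm hmN hsub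
        have hle : 2 ^ L.length * m ≤ 2 ^ (m - 1) * m :=
          Nat.mul_le_mul_right m (Nat.pow_le_pow_right (by norm_num) (by omega))
        have heq : 2 ^ m * m = 2 * (2 ^ (m - 1) * m) := by
          rw [show (2:ℕ) ^ m = 2 ^ (m - 1) * 2 from by rw [← pow_succ]; congr 1; omega]
          ring
        have hpos : 0 < 2 ^ (m - 1) * m := Nat.mul_pos (Nat.pow_pos (by norm_num : 0 < 2)) hm
        omega
      · -- n > N : min is m, length ≤ m
        have hmin : (insert n (Finset.Icc m N)).min' h = m := by
          apply min'_eq_of h (Finset.mem_insert_of_mem (Finset.mem_Icc.mpr ⟨le_refl m, hmN⟩))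
          intro x hx
          rcases Finset.mem_insert.mp hx with rfl | hx'
          · omega
          · exact (Finset.mem_Icc.mp hx').1
        rw [hmin] at hlen
        have hnU : n ∈ L.foldr (· ∪ ·) ∅ := by
          rw [hunion]; exact Finset.mem_insert_self _ _
        have hbound := strong_bound L hpair hS m N n hm hmN hgt hsub hnU
        have hle : 2 ^ L.length * m ≤ 2 ^ m * m :=
          Nat.mul_le_mul_right m (Nat.pow_le_pow_right (by norm_num) hlen)
        omega
  · calc 2 ^ m * m ≤ 2 ^ m * 2 ^ m := Nat.mul_le_mul_left _ (le_of_lt Nat.lt_two_pow_self)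
      _ = 2 ^ (2 * m) := by rw [← pow_add]; ring_nf
  · rfl
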